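/- (Existence of the conservative shift μ*.) Let (Ω, μ) be a measure space with 0 < μ(Ω) < ∞, let f ∈ L¹(Ω, μ), and let a, c, C ∈ ℝ with c ≤ C be such that c ≤ f(x) ≤ C for μ-almost every x. Assume c ≤ a and ∫_Ω f dμ ≥ a·μ(Ω). Then there exists μ* ∈ [c - a, C - a] such that ∫_Ω max(f(x) - μ*, a) dμ(x) = ∫_Ω f dμ. -/

import Mathlib

open MeasureTheory

/-- Existence of the conservative shift `μ*`: there is `μ* ∈ [c - a, C - a]`
such that truncating `f - μ*` at level `a` preserves the total mass of `f`. -/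
theorem exists_conservative_shift {Ω : Type*} [MeasurableSpace Ω] (μ : Measure Ω)
    [IsFiniteMeasure μ] (hΩpos : 0 < μ Set.univ)
    (f : Ω → ℝ) (hf : Integrable f μ) (a c C : ℝ) (hcC : c ≤ C)
    (hbound : ∀ᵐ x ∂μ, c ≤ f x ∧ f x ≤ C)
    (hca : c ≤ a) (hmass : a * (μ Set.univ).toReal ≤ ∫ x, f x ∂μ) :
    ∃ μstar ∈ Set.Icc (c - a) (C - a),
      (∫ x, max (f x - μstar) a ∂μ) = ∫ x, f x ∂μ := by
  set m : ℝ := (μ Set.univ).toReal with hm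
  have hm0 : 0 ≤ m := ENNReal.toReal_nonneg
  set g : ℝ → ℝ := fun s => ∫ x, max (f x - s) a ∂μ with hg
  have hint : ∀ s : ℝ, Integrable (fun x => max (f x - s) a) μ := fun s =>
    (hf.sub (integrable_const s)).sup (integrable_const a)
  -- g is Lipschitz with constant m
  have hlip : ∀ s t : ℝ, |g s - g t| ≤ |s - t| * m := by
    intro s t
    have h1 : g s - g t = ∫ x, (max (f x - s) a - max (f x - t) a) ∂μ := by
      rw [integral_sub (hint s) (hint t)]
    rw [h1]
    have := norm_integral_le_of_norm_le_const (μ := μ)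
      (f := fun x => max (f x - s) a - max (f x - t) a) (C := |s - t|)
      (Filter.Eventually.of_forall (fun x => by
        have h := abs_max_sub_max_le_abs (f x - s) (f x - t) a
        simpa [Real.norm_eq_abs, abs_sub_comm s t] using h.trans_eq (by ring_nf)))
    simpa [Real.norm_eq_abs, hm, measureReal_def] using this
  have hcont : Continuous g := by
    rw [Metric.continuous_iff]
    intro s ε hε
    rcases eq_or_lt_of_le hm0 with h0 | h0
    · exact ⟨1, one_pos, fun t _ => by
        have := hlip t s
        rw [← h0, mul_zero] at this
        simpa [Real.dist_eq] using lt_of_le_of_lt this hε⟩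
    · refine ⟨ε / m, div_pos hε h0, fun t ht => ?_⟩
      have := hlip t s
      have : |g t - g s| < (ε / m) * m :=
        lt_of_le_of_lt this (by
          exact mul_lt_mul_of_pos_right (by simpa [Real.dist_eq] using ht) h0)
      rw [Real.dist_eq]
      rwa [div_mul_cancel₀ _ h0.ne'] at this
  -- endpoint values
  have hgc : g (c - a) = (∫ x, f x ∂μ) - (c - a) * m := by
    have hcongr : (fun x => max (f x - (c - a)) a) =ᵐ[μ] fun x => f x - (c - a) := by
      filter_upwards [hbound] with x hx
      exact max_eq_left (by linarith [hx.1])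
    rw [hg]
    calc ∫ x, max (f x - (c - a)) a ∂μ = ∫ x, (f x - (c - a)) ∂μ :=
          integral_congr_ae hcongr
      _ = (∫ x, f x ∂μ) - (c - a) * m := by
          rw [integral_sub hf (integrable_const _), integral_const, smul_eq_mul, measureReal_def, hm, mul_comm]
  have hgC : g (C - a) = a * m := by
    have hcongr : (fun x => max (f x - (C - a)) a) =ᵐ[μ] fun _ => a := by
      filter_upwards [hbound] with x hx
      exact max_eq_right (by linarith [hx.2])
    rw [hg]
    calc ∫ x, max (f x - (C - a)) a ∂μ = ∫ _, a ∂μ := integral_congr_ae hcongr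
      _ = a * m := by rw [integral_const, smul_eq_mul, measureReal_def, hm, mul_comm]
  have h1 : g (C - a) ≤ ∫ x, f x ∂μ := by rw [hgC]; exact hmass
  have h2 : (∫ x, f x ∂μ) ≤ g (c - a) := by
    rw [hgc]
    nlinarith [mul_nonneg (sub_nonneg.mpr hca) hm0]
  have hle : c - a ≤ C - a := by linarith
  have := intermediate_value_Icc' hle hcont.continuousOn
  have hmem : (∫ x, f x ∂μ) ∈ Set.Icc (g (C - a)) (g (c - a)) := ⟨h1, h2⟩
  obtain ⟨s, hs, hgs⟩ := this hmem
  exact ⟨s, hs, hgs⟩
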